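/- If a closed unital Banach subalgebra A of B(H) contains two isometries with mutually orthogonal ranges, then the right topological stable rank of A is infinite. -/

import Mathlib

set_option maxHeartbeats 1000000
set_option synthInstance.maxHeartbeats 400000

/-- `n`-tuples generating `A` as a left ideal. -/
noncomputable def Lg (A : Type*) [NormedRing A] (n : ℕ) : Set (Fin n → A) :=
  {a | ∃ b : Fin n → A, ∑ i, b i * a i = 1}

/-- `n`-tuples generating `A` as a right ideal. -/
noncomputable def Rg (A : Type*) [NormedRing A] (n : ℕ) : Set (Fin n → A) :=
  {a | ∃ b : Fin n → A, ∑ i, a i * b i = 1}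

/-- The left topological stable rank. -/
noncomputable def ltsr (A : Type*) [NormedRing A] : ℕ∞ :=
  sInf {N : ℕ∞ | ∃ n : ℕ, N = n ∧ Dense (Lg A n)}

/-- The right topological stable rank. -/
noncomputable def rtsr (A : Type*) [NormedRing A] : ℕ∞ :=
  sInf {N : ℕ∞ | ∃ n : ℕ, N = n ∧ Dense (Rg A n)}

section aux
variable {R : Type*} [Ring R] [StarRing R] {u v : R}

lemma aux_pow (hu : star u * u = 1) : ∀ k : ℕ, star (u^k) * u^k = 1 := by
  intro k
  induction k with
  | zero => simp
  | succ m ih =>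
    rw [pow_succ', star_mul, mul_assoc, ← mul_assoc (star u), hu, one_mul, ih]

lemma aux_shift (hu : star u * u = 1) {i j : ℕ} (h : i ≤ j) :
    star (u^i) * u^j = u^(j-i) := by
  obtain ⟨d, rfl⟩ := Nat.exists_eq_add_of_le h
  rw [pow_add, ← mul_assoc, aux_pow hu, one_mul, Nat.add_sub_cancel_left]

lemma aux_vu (huv : star u * v = 0) : star v * u = 0 := by
  have := congrArg star huv
  simpa [star_mul] using this

lemma aux_v_pow (huv : star u * v = 0) {k : ℕ} (hk : 1 ≤ k) :
    star v * u^k = 0 := by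
  obtain ⟨m, rfl⟩ := Nat.exists_eq_add_of_le hk
  rw [pow_add, pow_one, ← mul_assoc, aux_vu huv, zero_mul]

/-- orthogonality of the words `u^i * v`. -/
lemma aux_delta (hu : star u * u = 1) (hv : star v * v = 1) (huv : star u * v = 0) :
    ∀ i j : ℕ, star (u^i * v) * (u^j * v) = if i = j then 1 else 0 := by
  have key : ∀ i j : ℕ, i ≤ j → star (u^i * v) * (u^j * v) = if i = j then 1 else 0 := by
    intro i j hij
    rw [star_mul, mul_assoc, ← mul_assoc (star (u^i)), aux_shift hu hij]
    rcases eq_or_lt_of_le hij with h | h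
    · subst h; simp [hv]
    · rw [if_neg (Nat.ne_of_lt h), ← mul_assoc, aux_v_pow huv (by omega), zero_mul]
  intro i j
  rcases le_total i j with h | h
  · exact key i j h
  · have h2 := key j i h
    have := congrArg star h2
    rw [star_mul, star_star] at this
    rcases eq_or_ne i j with rfl | hne
    · simpa using this
    · simpa [Ne.symm hne, hne] using this

/-- the top word kills the others. -/
lemma aux_top (hu : star u * u = 1) (huv : star u * v = 0) {i n : ℕ} (h : i < n) :
    star (u^n) * (u^i * v) = 0 := by
  have h1 : star (u^i * v) * u^n = 0 := by
    rw [star_mul, mul_assoc, aux_shift hu h.le]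
    exact aux_v_pow huv (by omega)
  have := congrArg star h1
  simpa [star_mul] using this

end aux

lemma aux_norm_one {R : Type*} [NormedRing R] [StarRing R] [CStarRing R] [NormOneClass R]
    {w : R} (hw : star w * w = 1) : ‖w‖ = 1 := by
  have h := CStarRing.norm_star_mul_self (x := w)
  rw [hw, norm_one] at h
  nlinarith [norm_nonneg w]

lemma key_not_dense {H : Type*} [NormedAddCommGroup H] [InnerProductSpace ℂ H] [CompleteSpace H]
    [Nontrivial H]
    (𝒜 : Subalgebra ℂ (H →L[ℂ] H))
    (U V : H →L[ℂ] H) (hU : U ∈ 𝒜) (hV : V ∈ 𝒜)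
    (hUiso : star U * U = 1) (hViso : star V * V = 1) (horth : star U * V = 0)
    (n : ℕ) : ¬ Dense (Rg 𝒜 n) := by
  intro hD
  set W : ℕ → (H →L[ℂ] H) := fun k => U^k * V with hWdef
  have hWmem : ∀ k, W k ∈ 𝒜 := fun k => mul_mem (pow_mem hU k) hV
  have hdel : ∀ i j : ℕ, star (W i) * W j = if i = j then 1 else 0 :=
    aux_delta hUiso hViso horth
  have hWiso : ∀ k, star (W k) * W k = 1 := by
    intro k; simpa using hdel k k
  have hWnorm : ∀ k, ‖W k‖ = 1 := fun k => aux_norm_one (hWiso k)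
  have hTnorm : ‖(U^n : H →L[ℂ] H)‖ = 1 := aux_norm_one (aux_pow hUiso n)
  set x : ℝ := (n : ℝ) with hxdef
  have hx0 : (0:ℝ) ≤ x := Nat.cast_nonneg n
  set ε : ℝ := (4*x+4)⁻¹ with hεdef
  have hεpos : 0 < ε := by positivity
  have hεn : ε * (4*x+4) = 1 := by
    rw [hεdef]; field_simp
  -- get an approximating tuple
  set a : Fin n → ↥𝒜 := fun i => ⟨W i, hWmem i⟩ with hadef
  obtain ⟨c, hcball, hcRg⟩ := Metric.dense_iff.mp hD a ε hεpos
  obtain ⟨b, hb⟩ := hcRg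
  have hsum : ∑ i, (c i : H →L[ℂ] H) * (b i : H →L[ℂ] H) = 1 := by
    have := congrArg (Subalgebra.val 𝒜) hb
    push_cast at this
    simpa using this
  have hE : ∀ i : Fin n, ‖(c i : H →L[ℂ] H) - W (i : ℕ)‖ ≤ ε := by
    intro i
    have h1 : dist (c i) (a i) ≤ dist c a := dist_le_pi_dist c a i
    rw [Subtype.dist_eq, dist_eq_norm] at h1
    have h2 : ((a i : H →L[ℂ] H)) = W (i : ℕ) := rfl
    rw [h2] at h1
    exact h1.trans (le_of_lt (by simpa [Metric.mem_ball] using hcball))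
  set Bn : ℝ := ∑ i, ‖(b i : H →L[ℂ] H)‖ with hBdef
  have hBn0 : 0 ≤ Bn := Finset.sum_nonneg fun i _ => norm_nonneg _
  -- the error-sum estimate, for any coefficient operator s of norm ≤ 1
  have herr : ∀ s : H →L[ℂ] H, ‖s‖ = 1 →
      ‖∑ i, (s * ((c i : H →L[ℂ] H) - W (i:ℕ))) * (b i : H →L[ℂ] H)‖ ≤ ε * Bn := by
    intro s hs
    calc ‖∑ i, (s * ((c i : H →L[ℂ] H) - W (i:ℕ))) * (b i : H →L[ℂ] H)‖
        ≤ ∑ i, ‖(s * ((c i : H →L[ℂ] H) - W (i:ℕ))) * (b i : H →L[ℂ] H)‖ :=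
          norm_sum_le _ _
      _ ≤ ∑ i, ε * ‖(b i : H →L[ℂ] H)‖ := by
          refine Finset.sum_le_sum fun i _ => ?_
          calc ‖(s * ((c i : H →L[ℂ] H) - W (i:ℕ))) * (b i : H →L[ℂ] H)‖
              ≤ ‖s * ((c i : H →L[ℂ] H) - W (i:ℕ))‖ * ‖(b i : H →L[ℂ] H)‖ :=
                norm_mul_le _ _
            _ ≤ (‖s‖ * ‖(c i : H →L[ℂ] H) - W (i:ℕ)‖) * ‖(b i : H →L[ℂ] H)‖ :=
                mul_le_mul_of_nonneg_right (norm_mul_le _ _) (norm_nonneg _)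
            _ ≤ (1 * ε) * ‖(b i : H →L[ℂ] H)‖ := by
                refine mul_le_mul_of_nonneg_right ?_ (norm_nonneg _)
                rw [hs]
                exact mul_le_mul_of_nonneg_left (hE i) zero_le_one
            _ = ε * ‖(b i : H →L[ℂ] H)‖ := by ring
      _ = ε * Bn := by rw [← Finset.mul_sum]
  -- the expansion identity for a coefficient operator s
  have hexp : ∀ s : H →L[ℂ] H,
      s = (∑ i : Fin n, (s * W (i:ℕ)) * (b i : H →L[ℂ] H))
          + ∑ i : Fin n, (s * ((c i : H →L[ℂ] H) - W (i:ℕ))) * (b i : H →L[ℂ] H) := by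
    intro s
    have h1 : s * ∑ i, (c i : H →L[ℂ] H) * (b i : H →L[ℂ] H) = s := by rw [hsum, mul_one]
    calc s = s * ∑ i, (c i : H →L[ℂ] H) * (b i : H →L[ℂ] H) := h1.symm
      _ = ∑ i : Fin n, ((s * W (i:ℕ)) * (b i : H →L[ℂ] H)
            + (s * ((c i : H →L[ℂ] H) - W (i:ℕ))) * (b i : H →L[ℂ] H)) := by
          rw [Finset.mul_sum]
          refine Finset.sum_congr rfl fun i _ => ?_
          noncomm_ring
      _ = _ := Finset.sum_add_distrib
  -- bound each ‖b j‖
  have hbnorm : ∀ j : Fin n, ‖(b j : H →L[ℂ] H)‖ ≤ 1 + ε * Bn := by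
    intro j
    have hstarnorm : ‖star (W (j:ℕ))‖ = 1 := by rw [norm_star]; exact hWnorm _
    have h1 := hexp (star (W (j:ℕ)))
    have h2 : ∑ i : Fin n, (star (W (j:ℕ)) * W (i:ℕ)) * (b i : H →L[ℂ] H) = (b j : H →L[ℂ] H) := by
      have h3 : ∀ i : Fin n, (star (W (j:ℕ)) * W (i:ℕ)) * (b i : H →L[ℂ] H)
          = if i = j then (b i : H →L[ℂ] H) else 0 := by
        intro i
        rw [hdel]
        rcases eq_or_ne i j with rfl | hne
        · simp
        · have hne' : (↑j:ℕ) ≠ ↑i := fun h => hne (Fin.val_injective h.symm)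
          simp [hne, hne']
      rw [Finset.sum_congr rfl fun i _ => h3 i]
      simp
    rw [h2] at h1
    have h4 : (b j : H →L[ℂ] H)
        = star (W (j:ℕ)) - ∑ i : Fin n, (star (W (j:ℕ)) * ((c i : H →L[ℂ] H) - W (i:ℕ))) * (b i : H →L[ℂ] H) :=
      eq_sub_of_add_eq h1.symm
    rw [h4]
    calc ‖star (W (j:ℕ)) - ∑ i, (star (W (j:ℕ)) * ((c i : H →L[ℂ] H) - W (i:ℕ))) * (b i : H →L[ℂ] H)‖
        ≤ ‖star (W (j:ℕ))‖ + ‖∑ i, (star (W (j:ℕ)) * ((c i : H →L[ℂ] H) - W (i:ℕ))) * (b i : H →L[ℂ] H)‖ :=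
          norm_sub_le _ _
      _ ≤ 1 + ε * Bn := by
          rw [hstarnorm]
          exact add_le_add le_rfl (herr _ hstarnorm)
  have hBn : Bn ≤ x * (1 + ε * Bn) := by
    calc Bn = ∑ j : Fin n, ‖(b j : H →L[ℂ] H)‖ := rfl
      _ ≤ ∑ _j : Fin n, (1 + ε * Bn) := Finset.sum_le_sum fun j _ => hbnorm j
      _ = x * (1 + ε * Bn) := by
          rw [Finset.sum_const, Finset.card_univ, Fintype.card_fin, nsmul_eq_mul]
  -- the final estimate with s = star (U^n)
  have hfin : 1 ≤ ε * Bn := by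
    have hstarnorm : ‖star (U^n : H →L[ℂ] H)‖ = 1 := by rw [norm_star]; exact hTnorm
    have h1 := hexp (star (U^n))
    have h2 : ∑ i : Fin n, (star (U^n : H →L[ℂ] H) * W (i:ℕ)) * (b i : H →L[ℂ] H) = 0 := by
      refine Finset.sum_eq_zero fun i _ => ?_
      rw [hWdef]
      rw [aux_top hUiso horth i.isLt, zero_mul]
    rw [h2, zero_add] at h1
    calc (1:ℝ) = ‖star (U^n : H →L[ℂ] H)‖ := hstarnorm.symm
      _ = ‖∑ i : Fin n, (star (U^n : H →L[ℂ] H) * ((c i : H →L[ℂ] H) - W (i:ℕ))) * (b i : H →L[ℂ] H)‖ := by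
          rw [← h1]
      _ ≤ ε * Bn := herr _ hstarnorm
  -- arithmetic contradiction
  have h6 : 4*x+4 ≤ Bn := by
    have h := mul_le_mul_of_nonneg_right hfin (show (0:ℝ) ≤ 4*x+4 by positivity)
    calc 4*x+4 = 1*(4*x+4) := by ring
      _ ≤ ε*Bn*(4*x+4) := h
      _ = (ε*(4*x+4))*Bn := by ring
      _ = Bn := by rw [hεn, one_mul]
  have h8 : Bn * (4*x+4) ≤ x*(4*x+4) + x*Bn := by
    have h := mul_le_mul_of_nonneg_right hBn (show (0:ℝ) ≤ 4*x+4 by positivity)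
    calc Bn*(4*x+4) ≤ x*(1+ε*Bn)*(4*x+4) := h
      _ = x*(4*x+4) + (ε*(4*x+4))*(x*Bn) := by ring
      _ = x*(4*x+4) + x*Bn := by rw [hεn, one_mul]
  nlinarith [h6, h8, hx0, hBn0, mul_le_mul_of_nonneg_left h6 hx0, mul_nonneg hx0 hBn0]

/-- A closed unital subalgebra of `B(H)` containing two isometries with mutually orthogonal
ranges has infinite right topological stable rank. -/
theorem stmt7 {H : Type*} [NormedAddCommGroup H] [InnerProductSpace ℂ H] [CompleteSpace H]
    [Nontrivial H]
    (𝒜 : Subalgebra ℂ (H →L[ℂ] H)) (hclosed : IsClosed (𝒜 : Set (H →L[ℂ] H)))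
    (U V : H →L[ℂ] H) (hU : U ∈ 𝒜) (hV : V ∈ 𝒜)
    (hUiso : star U * U = 1) (hViso : star V * V = 1) (horth : star U * V = 0) :
    rtsr 𝒜 = ⊤ := by
  have hnd : ∀ n : ℕ, ¬ Dense (Rg 𝒜 n) :=
    fun n => key_not_dense 𝒜 U V hU hV hUiso hViso horth n
  have hset : {N : ℕ∞ | ∃ n : ℕ, N = n ∧ Dense (Rg 𝒜 n)} = ∅ := by
    ext N
    simp only [Set.mem_setOf_eq, Set.mem_empty_iff_false, iff_false]
    rintro ⟨n, rfl, hd⟩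
    exact hnd n hd
  unfold rtsr
  rw [hset, sInf_empty]
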